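/- arXiv:2110.02738 — 3 statements merged into one kernel-verified Lean document; each statement's English description precedes it below -/
import Mathlib

section
/- Let N be an odd positive integer and u an integer with gcd(u, N) = 1. Define the Zadoff-Chu sequence z_u : {0,…,N−1} → ℂ by z_u[n] = exp(−iπ u n(n+1)/N). Then for every integer c with 0 < c < N, the periodic autocorrelation vanishes: ∑_{n=0}^{N−1} z_u[n] · conj(z_u[(n+c) mod N]) = 0. -/
open Finset

noncomputable def zcE (N : ℕ) (k : ℤ) : ℂ :=
  Complex.exp (Complex.I * (Real.pi : ℂ) * (k : ℂ) / (N : ℂ))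

lemma zcE_add (N : ℕ) (a b : ℤ) : zcE N (a + b) = zcE N a * zcE N b := by
  rw [zcE, zcE, zcE, ← Complex.exp_add]
  congr 1
  push_cast
  ring

lemma zcE_two_mul (N : ℕ) (hN : 0 < N) (t : ℤ) : zcE N (2 * N * t) = 1 := by
  have hNne : (N : ℂ) ≠ 0 := Nat.cast_ne_zero.mpr hN.ne'
  rw [zcE]
  have : Complex.I * (Real.pi : ℂ) * ((2 * N * t : ℤ) : ℂ) / (N : ℂ)
      = (t : ℂ) * (2 * Real.pi * Complex.I) := by
    field_simp
    push_cast
    ring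
  rw [this, Complex.exp_int_mul_two_pi_mul_I]

lemma zcE_period (N : ℕ) (hN : 0 < N) (k t : ℤ) : zcE N (k + 2 * N * t) = zcE N k := by
  rw [zcE_add, zcE_two_mul N hN, mul_one]

lemma zcE_pow (N : ℕ) (a : ℤ) (n : ℕ) : zcE N a ^ n = zcE N (a * n) := by
  rw [zcE, zcE, ← Complex.exp_nat_mul]
  congr 1
  push_cast
  ring

/-- **Zero periodic autocorrelation of Zadoff-Chu sequences.**
For an odd positive integer `N` and a root index `u` coprime to `N`, the
Zadoff-Chu sequence `z_u[n] = exp(-iπ u n(n+1)/N)` has vanishing periodic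
autocorrelation at every nonzero cyclic shift `c` with `0 < c < N`. -/
theorem zadoff_chu_autocorrelation_zero
    (N : ℕ) (hN : 0 < N) (hNodd : Odd N) (u : ℤ) (hu : Int.gcd u N = 1)
    (z : ℕ → ℂ)
    (hz : ∀ n : ℕ, z n =
      Complex.exp (-(Complex.I * (Real.pi : ℂ) * (u : ℂ) * (n : ℂ) * ((n : ℂ) + 1)) / (N : ℂ)))
    (c : ℕ) (hc0 : 0 < c) (hcN : c < N) :
    ∑ n ∈ Finset.range N, z n * (starRingEnd ℂ) (z ((n + c) % N)) = 0 := by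
  have hNne : (N : ℂ) ≠ 0 := Nat.cast_ne_zero.mpr hN.ne'
  obtain ⟨K₀, hK₀⟩ := hNodd
  have hK : (N : ℤ) = 2 * (K₀ : ℤ) + 1 := by exact_mod_cast hK₀
  have hz' : ∀ n : ℕ, z n = zcE N (-(u * n * (n + 1))) := by
    intro n
    rw [hz, zcE]
    congr 1
    push_cast
    ring
  have hconj : ∀ m : ℕ, (starRingEnd ℂ) (z m) = zcE N (u * m * (m + 1)) := by
    intro m
    rw [hz, ← Complex.exp_conj, zcE]
    congr 1
    simp only [map_div₀, map_neg, map_mul, map_add, map_one, Complex.conj_I,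
      Complex.conj_ofReal, map_intCast, map_natCast]
    push_cast
    ring
  have key : ∀ n ∈ Finset.range N,
      z n * (starRingEnd ℂ) (z ((n + c) % N))
        = zcE N (u * c * (c + 1)) * (zcE N (2 * u * c)) ^ n := by
    intro n _
    rw [hz' n, hconj, ← zcE_add, zcE_pow, ← zcE_add]
    have hmval : (((n + c) % N : ℕ) : ℤ) = ((n : ℤ) + c) % N := by push_cast; rfl
    obtain ⟨j, hj⟩ : ∃ j : ℤ, (((n + c) % N : ℕ) : ℤ) = ((n : ℤ) + c) - N * j :=
      ⟨((n : ℤ) + c) / N, by rw [hmval, Int.emod_def]⟩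
    have hpar : Even (j * (2 * ((n : ℤ) + c) + 1 - N * j)) := by
      rcases Int.even_or_odd j with ⟨j', rfl⟩ | ⟨j', rfl⟩
      · exact ⟨j' * (2 * ((n : ℤ) + c) + 1 - (N : ℤ) * (j' + j')), by ring⟩
      · exact ⟨(2 * j' + 1) * (((n : ℤ) + c) - 2 * K₀ * j' - K₀ - j'), by rw [hK]; ring⟩
    obtain ⟨s, hs⟩ := hpar
    have hexp : -(u * n * (n + 1)) + u * (((n + c) % N : ℕ) : ℤ) * ((((n + c) % N : ℕ) : ℤ) + 1)
        = (u * c * (c + 1) + 2 * u * c * n) + 2 * N * (-(u * s)) := by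
      rw [hj]
      linear_combination (-(u * (N : ℤ))) * hs
    rw [hexp, zcE_period N hN]
  rw [Finset.sum_congr rfl key, ← Finset.mul_sum]
  have hω1 : zcE N (2 * u * c) ≠ 1 := by
    intro h
    rw [zcE, Complex.exp_eq_one_iff] at h
    obtain ⟨k, hk⟩ := h
    have h2 : (2 * (Real.pi : ℂ) * Complex.I) * ((u : ℂ) * c)
        = (2 * (Real.pi : ℂ) * Complex.I) * ((k : ℂ) * N) := by
      field_simp at hk
      push_cast at hk
      linear_combination (Real.pi : ℂ) * Complex.I * hk
    have hne : (2 * (Real.pi : ℂ) * Complex.I) ≠ 0 := by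
      simp [Complex.ofReal_ne_zero, Real.pi_ne_zero, Complex.I_ne_zero]
    have h3 : (u : ℂ) * c = (k : ℂ) * N := mul_left_cancel₀ hne h2
    have h4 : u * (c : ℤ) = k * N := by exact_mod_cast h3
    have hdvd : (N : ℤ) ∣ u * c := ⟨k, by linarith⟩
    have hcop : IsCoprime (N : ℤ) u := by
      rw [Int.isCoprime_iff_gcd_eq_one, Int.gcd_comm]
      exact hu
    have hdc : (N : ℤ) ∣ (c : ℤ) := hcop.dvd_of_dvd_mul_left hdvd
    have : N ∣ c := Int.natCast_dvd_natCast.mp hdc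
    exact absurd (Nat.le_of_dvd hc0 this) (not_le.mpr hcN)
  have hωN : zcE N (2 * u * c) ^ N = 1 := by
    rw [zcE_pow]
    have : 2 * u * (c : ℤ) * N = 0 + 2 * N * (u * c) := by ring
    rw [this, zcE_period N hN]
    simp [zcE]
  rw [geom_sum_eq hω1, hωN]
  simp
end

section
/- Let N be an odd positive integer and u an integer with gcd(u, N) = 1, and let z_u[n] = exp(−iπ u n(n+1)/N). Then distinct cyclic shifts of z_u are orthogonal: for all integers l, l' with 0 ≤ l < N, 0 ≤ l' < N and l ≠ l', one has ∑_{n=0}^{N−1} z_u[(n+l) mod N] · conj(z_u[(n+l') mod N]) = 0. -/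
open Finset

private lemma zc_mod (N : ℕ) (hN : 0 < N) (hNodd : Odd N) (u : ℤ)
    (z : ℕ → ℂ)
    (hz : ∀ n : ℕ, z n =
      Complex.exp (-(Complex.I * (Real.pi : ℂ) * (u : ℂ) * (n : ℂ) * ((n : ℂ) + 1)) / (N : ℂ)))
    (m : ℕ) :
    z (m % N) = Complex.exp (-(Complex.I * (Real.pi : ℂ) * (u : ℂ) * (m : ℂ) * ((m : ℂ) + 1)) / (N : ℂ)) := by
  set r := m % N with hr
  set q := m / N with hq
  have hm : m = N * q + r := by rw [hr, hq]; exact (Nat.div_add_mod m N).symm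
  have heven : Even ((q : ℤ) * (N * q + 2 * r + 1)) := by
    rcases Int.even_or_odd (q : ℤ) with hqe | hqo
    · exact hqe.mul_right _
    · have h1 : Odd ((N : ℤ) * q) :=
        (Int.odd_mul).mpr ⟨(Int.odd_coe_nat N).mpr hNodd, hqo⟩
      have h2 : Even ((N : ℤ) * q + 2 * r + 1) := by
        rcases h1 with ⟨k, hk⟩
        exact ⟨k + r + 1, by linarith⟩
      exact h2.mul_left _
  obtain ⟨k, hk⟩ := heven
  have hNne : (N : ℂ) ≠ 0 := Nat.cast_ne_zero.mpr hN.ne'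
  rw [hz r]
  have hkC : (2 : ℂ) * k = (q : ℂ) * ((N : ℂ) * q + 2 * r + 1) := by
    have h : (2 * k : ℤ) = ((q : ℤ) * (N * q + 2 * r + 1) : ℤ) := by linarith
    exact_mod_cast congrArg (Int.cast : ℤ → ℂ) h
  have hmC : (m : ℂ) = (N : ℂ) * q + r := by exact_mod_cast congrArg (Nat.cast : ℕ → ℂ) hm
  have key2 : -(Complex.I * (Real.pi : ℂ) * (u : ℂ) * (r : ℂ) * ((r : ℂ) + 1))
      = -(Complex.I * (Real.pi : ℂ) * (u : ℂ) * (m : ℂ) * ((m : ℂ) + 1))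
        + ((u * k : ℤ) : ℂ) * (2 * (Real.pi : ℂ) * Complex.I) * (N : ℂ) := by
    push_cast
    linear_combination (-(Complex.I * (Real.pi : ℂ) * (u : ℂ) * (N : ℂ))) * hkC +
      (Complex.I * (Real.pi : ℂ) * (u : ℂ) * ((m:ℂ) + (N:ℂ) * q + (r:ℂ) + 1)) * hmC
  have key : -(Complex.I * (Real.pi : ℂ) * (u : ℂ) * (r : ℂ) * ((r : ℂ) + 1)) / (N : ℂ)
      = -(Complex.I * (Real.pi : ℂ) * (u : ℂ) * (m : ℂ) * ((m : ℂ) + 1)) / (N : ℂ)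
        + ((u * k : ℤ) : ℂ) * (2 * (Real.pi : ℂ) * Complex.I) := by
    rw [key2, add_div, mul_div_assoc, div_self hNne, mul_one]
  rw [key, Complex.exp_add, Complex.exp_int_mul_two_pi_mul_I, mul_one]

/-- **Orthogonality of distinct cyclic shifts of a Zadoff-Chu sequence.**
For an odd positive integer `N` and a root index `u` coprime to `N`, distinct
cyclic shifts of the Zadoff-Chu sequence `z_u[n] = exp(-iπ u n(n+1)/N)` are
orthogonal. -/
theorem zadoff_chu_shifts_orthogonal
    (N : ℕ) (hN : 0 < N) (hNodd : Odd N) (u : ℤ) (hu : Int.gcd u N = 1)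
    (z : ℕ → ℂ)
    (hz : ∀ n : ℕ, z n =
      Complex.exp (-(Complex.I * (Real.pi : ℂ) * (u : ℂ) * (n : ℂ) * ((n : ℂ) + 1)) / (N : ℂ)))
    (l l' : ℕ) (hl : l < N) (hl' : l' < N) (hne : l ≠ l') :
    ∑ n ∈ Finset.range N, z ((n + l) % N) * (starRingEnd ℂ) (z ((n + l') % N)) = 0 := by
  have hNne : (N : ℂ) ≠ 0 := Nat.cast_ne_zero.mpr hN.ne'
  set d : ℂ := (l : ℂ) - (l' : ℂ) with hd
  set w : ℂ := -(2 * (Real.pi : ℂ) * Complex.I * (u : ℂ) * d) / (N : ℂ) with hw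
  set c : ℂ := Complex.exp (-(Complex.I * (Real.pi : ℂ) * (u : ℂ) * d * ((l : ℂ) + (l' : ℂ) + 1)) / (N : ℂ)) with hc
  have hterm : ∀ n ∈ Finset.range N,
      z ((n + l) % N) * (starRingEnd ℂ) (z ((n + l') % N)) = c * Complex.exp w ^ n := by
    intro n _
    rw [zc_mod N hN hNodd u z hz (n + l), zc_mod N hN hNodd u z hz (n + l')]
    rw [← Complex.exp_conj]
    rw [← Complex.exp_nat_mul, ← Complex.exp_add, hc, ← Complex.exp_add]
    congr 1
    simp only [map_div₀, map_neg, map_mul, Complex.conj_I, map_natCast, map_intCast,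
      map_add, map_one, Complex.conj_ofReal, hw, hd]
    push_cast
    field_simp
    ring
  rw [Finset.sum_congr rfl hterm, ← Finset.mul_sum]
  have h2πI : (2 : ℂ) * (Real.pi : ℂ) * Complex.I ≠ 0 := by
    simp [Complex.ofReal_ne_zero.mpr Real.pi_ne_zero, Complex.I_ne_zero]
  have hω1 : Complex.exp w ≠ 1 := by
    intro h
    rw [Complex.exp_eq_one_iff] at h
    obtain ⟨k, hk⟩ := h
    rw [hw, div_eq_iff hNne, hd] at hk
    have hC : ((u * ((l : ℤ) - l') : ℤ) : ℂ) = (((-k) * N : ℤ) : ℂ) := by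
      apply mul_left_cancel₀ h2πI
      push_cast
      linear_combination -hk
    have hZ : (u * ((l : ℤ) - l') : ℤ) = ((-k) * N : ℤ) := by exact_mod_cast hC
    have hdvd : (N : ℤ) ∣ u * ((l : ℤ) - l') := ⟨-k, by linarith⟩
    have hcop : IsCoprime u (N : ℤ) := Int.isCoprime_iff_gcd_eq_one.mpr hu
    have hdvdD : (N : ℤ) ∣ ((l : ℤ) - l') := IsCoprime.dvd_of_dvd_mul_left hcop.symm hdvd
    have hDne : ((l : ℤ) - l') ≠ 0 := by omega
    have h1 : (N : ℤ) ≤ |(l : ℤ) - l'| :=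
      Int.le_of_dvd (abs_pos.mpr hDne) ((dvd_abs _ _).mpr hdvdD)
    have h2 : |(l : ℤ) - l'| < N := by rw [abs_lt]; omega
    omega
  have hωN : Complex.exp w ^ N = 1 := by
    rw [← Complex.exp_nat_mul]
    have hNw : (N : ℂ) * w = ((-(u * ((l:ℤ) - l')) : ℤ) : ℂ) * (2 * (Real.pi : ℂ) * Complex.I) := by
      rw [hw, hd, mul_div_assoc', mul_comm, mul_div_assoc, div_self hNne]
      push_cast
      ring
    rw [hNw, Complex.exp_int_mul_two_pi_mul_I]
  rw [geom_sum_eq hω1, hωN]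
  simp
end

section
/- Let N be an odd positive integer and u an integer with gcd(u, N) = 1, and let z_u[n] = exp(−iπ u n(n+1)/N). For each l ∈ {0,…,N−1} define the vector w_l ∈ ℂ^N by w_l[n] = z_u[(n+l) mod N] · conj(z_u[n]). Then the averaged outer-product matrix (1/N) ∑_{l=0}^{N−1} w_l w_l^H equals the N×N identity matrix; in particular this covariance matrix is diagonal. -/
open Finset Matrix

/-- Periodicity of the Zadoff-Chu phase: shifting the (integer) index by a multiple
of the odd length `N` does not change the value. -/
private lemma zc_periodic (N : ℕ) (hN : 0 < N) (hNodd : Odd N) (u b q : ℤ) :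
    Complex.exp (-(Complex.I * (Real.pi : ℂ) * (u : ℂ) * ((b : ℂ) + (N : ℂ) * (q : ℂ))
        * (((b : ℂ) + (N : ℂ) * (q : ℂ)) + 1)) / (N : ℂ))
      = Complex.exp (-(Complex.I * (Real.pi : ℂ) * (u : ℂ) * (b : ℂ) * ((b : ℂ) + 1)) / (N : ℂ)) := by
  have hN0 : (N : ℂ) ≠ 0 := by
    exact_mod_cast Nat.cast_ne_zero.mpr hN.ne'
  -- q * (2*b + N*q + 1) is even
  obtain ⟨t, ht⟩ : Even (q * (2 * b + (N : ℤ) * q + 1)) := by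
    rcases Int.even_or_odd q with hq | hq
    · exact hq.mul_right _
    · refine Even.mul_left ?_ _
      have hNo : Odd (N : ℤ) := by exact_mod_cast hNodd
      have h1 : Odd ((N : ℤ) * q) := hNo.mul hq
      have h2 : Even ((N : ℤ) * q + 1) := h1.add_one
      have h3 : Even (2 * b) := even_two_mul b
      have := h3.add h2
      simpa [add_assoc] using this
  have hkey : (b + (N : ℤ) * q) * ((b + (N : ℤ) * q) + 1) = b * (b + 1) + (N : ℤ) * (2 * t) := by
    linear_combination (N : ℤ) * ht
  have hkeyC : ((b : ℂ) + (N : ℂ) * q) * (((b : ℂ) + (N : ℂ) * q) + 1)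
      = (b : ℂ) * ((b : ℂ) + 1) + (N : ℂ) * (2 * (t : ℂ)) := by
    exact_mod_cast hkey
  have hexp : (-(Complex.I * (Real.pi : ℂ) * (u : ℂ) * ((b : ℂ) + (N : ℂ) * (q : ℂ))
        * (((b : ℂ) + (N : ℂ) * (q : ℂ)) + 1)) / (N : ℂ))
      = (-(Complex.I * (Real.pi : ℂ) * (u : ℂ) * (b : ℂ) * ((b : ℂ) + 1)) / (N : ℂ))
        + ((-(u * t) : ℤ) : ℂ) * (2 * (Real.pi : ℂ) * Complex.I) := by
    have h5 : -(Complex.I * (Real.pi : ℂ) * (u : ℂ) * ((b : ℂ) + (N : ℂ) * (q : ℂ))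
          * (((b : ℂ) + (N : ℂ) * (q : ℂ)) + 1))
        = -(Complex.I * (Real.pi : ℂ) * (u : ℂ) * (b : ℂ) * ((b : ℂ) + 1))
          + ((-(u * t) : ℤ) : ℂ) * (2 * (Real.pi : ℂ) * Complex.I) * (N : ℂ) := by
      push_cast at hkeyC ⊢
      linear_combination (-(Complex.I * (Real.pi : ℂ) * (u : ℂ))) * hkeyC
    rw [h5, add_div, mul_div_cancel_right₀ _ hN0]
  rw [hexp, Complex.exp_add, Complex.exp_int_mul_two_pi_mul_I, mul_one]

/-- **The averaged outer product of matched-filter outputs over all cyclic shifts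
is the identity.** For the Zadoff-Chu sequence `z_u` of odd length `N` with
`gcd(u,N)=1`, setting `w_l[n] = z_u[(n+l) mod N] * conj(z_u[n])`, the matrix
`(1/N) ∑_{l<N} w_l w_lᴴ` equals the `N × N` identity; in particular it is diagonal. -/
theorem zadoff_chu_avg_outer_product_eq_identity
    (N : ℕ) (hN : 0 < N) (hNodd : Odd N) (u : ℤ) (hu : Int.gcd u N = 1)
    (z : ℕ → ℂ)
    (hz : ∀ n : ℕ, z n =
      Complex.exp (-(Complex.I * (Real.pi : ℂ) * (u : ℂ) * (n : ℂ) * ((n : ℂ) + 1)) / (N : ℂ)))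
    (w : ℕ → ℕ → ℂ)
    (hw : ∀ l n : ℕ, w l n = z ((n + l) % N) * (starRingEnd ℂ) (z n)) :
    ((N : ℂ))⁻¹ • ∑ l ∈ Finset.range N,
        Matrix.of (fun i j : Fin N => w l (i : ℕ) * (starRingEnd ℂ) (w l (j : ℕ)))
      = (1 : Matrix (Fin N) (Fin N) ℂ) := by
  have hN0 : (N : ℂ) ≠ 0 := by exact_mod_cast Nat.cast_ne_zero.mpr hN.ne'
  -- z at a reduced index equals the unreduced formula
  have hmod : ∀ m : ℕ, z (m % N) =
      Complex.exp (-(Complex.I * (Real.pi : ℂ) * (u : ℂ) * (m : ℂ) * ((m : ℂ) + 1)) / (N : ℂ)) := by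
    intro m
    rw [hz]
    have h := zc_periodic N hN hNodd u ((m % N : ℕ) : ℤ) ((m / N : ℕ) : ℤ)
    have hsum : (((m % N : ℕ) : ℤ) : ℂ) + (N : ℂ) * (((m / N : ℕ) : ℤ) : ℂ) = (m : ℂ) := by
      have : (m % N : ℕ) + N * (m / N : ℕ) = m := Nat.mod_add_div m N
      exact_mod_cast this
    rw [hsum] at h
    exact_mod_cast h.symm
  ext i j
  simp only [Matrix.smul_apply, Matrix.sum_apply, Matrix.of_apply, Matrix.one_apply,
    smul_eq_mul]
  -- the common ratio
  set c : ℂ := Complex.exp (-(2 * (Real.pi : ℂ) * Complex.I * (u : ℂ)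
      * ((i : ℂ) - (j : ℂ))) / (N : ℂ)) with hc
  have hterm : ∀ l : ℕ, w l (i : ℕ) * (starRingEnd ℂ) (w l (j : ℕ)) = c ^ l := by
    intro l
    rw [hw, hw]
    simp only [_root_.map_mul, Complex.conj_conj]
    rw [hmod, hmod, hz, hz]
    rw [← Complex.exp_conj, ← Complex.exp_conj]
    rw [← Complex.exp_add, ← Complex.exp_add, ← Complex.exp_add]
    have hcl : c ^ l = Complex.exp ((l : ℂ) * (-(2 * (Real.pi : ℂ) * Complex.I * (u : ℂ)
        * ((i : ℂ) - (j : ℂ))) / (N : ℂ))) := by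
      rw [hc, ← Complex.exp_nat_mul]
    rw [hcl]
    congr 1
    simp only [map_div₀, map_neg, _root_.map_mul, Complex.conj_I, Complex.conj_ofReal,
      map_intCast, map_natCast, _root_.map_add, _root_.map_one]
    push_cast
    field_simp
    ring
  rw [Finset.sum_congr rfl (fun l _ => hterm l)]
  by_cases hij : i = j
  · subst hij
    have hc1 : c = 1 := by
      rw [hc]
      simp
    simp [hc1, if_pos rfl]
    field_simp
  · rw [if_neg hij]
    have hd0 : ((i : ℤ) - (j : ℤ)) ≠ 0 := by
      intro h
      apply hij
      have : (i : ℤ) = (j : ℤ) := by omega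
      exact Fin.ext (by exact_mod_cast this)
    have hc1 : c ≠ 1 := by
      rw [hc]
      intro h
      rw [Complex.exp_eq_one_iff] at h
      obtain ⟨n, hn⟩ := h
      have h2 : (2 * (Real.pi : ℂ) * Complex.I) * (-(u : ℂ) * ((i : ℂ) - (j : ℂ)))
          = (2 * (Real.pi : ℂ) * Complex.I) * ((n : ℂ) * (N : ℂ)) := by
        field_simp at hn
        linear_combination (2 * (Real.pi : ℂ) * Complex.I) * hn
      have h3 : (-(u : ℂ)) * ((i : ℂ) - (j : ℂ)) = (n : ℂ) * (N : ℂ) :=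
        mul_left_cancel₀ Complex.two_pi_I_ne_zero h2
      have h4 : (-u) * ((i : ℤ) - (j : ℤ)) = n * (N : ℤ) := by exact_mod_cast h3
      have hdvd : (N : ℤ) ∣ u * ((i : ℤ) - (j : ℤ)) := ⟨-n, by linarith⟩
      have hcop : IsCoprime ((N : ℤ)) u := by
        rw [Int.isCoprime_iff_gcd_eq_one, Int.gcd_comm]
        exact hu
      have hdvd2 : (N : ℤ) ∣ ((i : ℤ) - (j : ℤ)) := hcop.dvd_of_dvd_mul_left hdvd
      have habs : |(i : ℤ) - (j : ℤ)| < (N : ℤ) := by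
        have hi := i.isLt
        have hj := j.isLt
        rw [abs_lt]
        omega
      exact hd0 (Int.eq_zero_of_abs_lt_dvd hdvd2 habs)
    rw [geom_sum_eq hc1]
    have hcN : c ^ N = 1 := by
      rw [hc, ← Complex.exp_nat_mul]
      have : (N : ℂ) * (-(2 * (Real.pi : ℂ) * Complex.I * (u : ℂ)
          * ((i : ℂ) - (j : ℂ))) / (N : ℂ))
          = ((-(u * ((i : ℤ) - (j : ℤ)))) : ℤ) * (2 * (Real.pi : ℂ) * Complex.I) := by
        push_cast
        field_simp
      rw [this, Complex.exp_int_mul_two_pi_mul_I]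
    rw [hcN]
    simp
end
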